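/- If a variable-electorate voting rule f satisfies participation, then for every finite electorate N, every profile P on N, and every voter i ∈ N, f(P) ≽_i f(P_{-i}, ≻_i^rev); that is, f satisfies half-way monotonicity on every fixed electorate. -/

import Mathlib

/-- The reverse of a linear order: `a` is above `b` in `revOrder L` iff `b` is above `a` in `L`. -/
def revOrder {A : Type*} (L : LinearOrder A) : LinearOrder A :=
  @OrderDual.instLinearOrder A L

/-- If a variable-electorate voting rule `f` (assigning a winner to every profile on every
finite electorate `N ⊆ ℕ`) satisfies participation, then on every fixed electorate it
satisfies half-way monotonicity: voting truthfully is weakly better than reversing one's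
preference ranking. -/
theorem participation_implies_halfwayMonotonicity {A : Type*} [Fintype A]
    (f : (N : Finset ℕ) → (∀ j ∈ N, LinearOrder A) → A)
    -- participation: a voter `i ∉ N` joining with order `L` weakly prefers the new outcome
    (hpart : ∀ (N : Finset ℕ) (i : ℕ), i ∉ N →
      ∀ (P : ∀ j ∈ N, LinearOrder A) (L : LinearOrder A),
        L.le (f N P)
          (f (insert i N) (fun j _ => if h : j ∈ N then P j h else L))) :
    -- half-way monotonicity on every electorate `N`
    ∀ (N : Finset ℕ) (P : ∀ j ∈ N, LinearOrder A) (i : ℕ) (hi : i ∈ N),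
      (P i hi).le
        (f N (fun j hj => if j = i then revOrder (P i hi) else P j hj))
        (f N P) := by
  intro N P i hi
  obtain ⟨M, him, rfl⟩ : ∃ M, i ∉ M ∧ insert i M = N :=
    ⟨N.erase i, Finset.notMem_erase i N, Finset.insert_erase hi⟩
  set L := P i hi with hL
  have P' : ∀ j ∈ M, LinearOrder A := fun j hj => P j (Finset.mem_insert_of_mem hj)
  have h1 := hpart M i him (fun j hj => P j (Finset.mem_insert_of_mem hj)) L
  have h2 := hpart M i him (fun j hj => P j (Finset.mem_insert_of_mem hj)) (revOrder L)
  have e1 : (fun (j : ℕ) (_ : j ∈ insert i M) =>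
      if h : j ∈ M then P j (Finset.mem_insert_of_mem h) else L) = P := by
    funext j hj
    by_cases h : j ∈ M
    · simp [h]
    · have hji : j = i := by
        rcases Finset.mem_insert.mp hj with h' | h'
        · exact h'
        · exact absurd h' h
      subst hji
      simp [h, hL]
  have e2 : (fun (j : ℕ) (_ : j ∈ insert i M) =>
      if h : j ∈ M then P j (Finset.mem_insert_of_mem h) else revOrder L) =
      (fun j hj => if j = i then revOrder (P i hi) else P j hj) := by
    funext j hj
    by_cases hji : j = i
    · subst hji
      simp [him, hL]
    · have h : j ∈ M := by
        rcases Finset.mem_insert.mp hj with h' | h'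
        · exact absurd h' hji
        · exact h'
      simp [h, hji]
  rw [e1] at h1
  rw [e2] at h2
  exact L.le_trans _ _ _ h2 h1
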